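/- For n ≥ 2, with a_p = (1/(2p)!) ∫_0^π cos^{2p}θ sin^{n-2}θ dθ, the power series identity κ [cos θ]_κ^2 + n [cos θ]_κ [1]_κ − κ [1]_κ^2 = Σ_{k≥0} ( Σ_{p+q=k} 2(p−q)^2 / ((2p+n)(2q+n)) · a_p a_q ) κ^{2k+1} holds, where [1]_κ = Σ_p a_p κ^{2p} and [cos θ]_κ = Σ_p (2p+2) a_{p+1} κ^{2p+1}. -/

import Mathlib

open Real intervalIntegral
open scoped BigOperators


lemma intrec (m p : ℕ) :
    ((2*p+m+2 : ℕ) : ℝ) * ∫ θ in (0:ℝ)..π, cos θ ^ (2*(p+1)) * sin θ ^ m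
      = ((2*p+1 : ℕ) : ℝ) * ∫ θ in (0:ℝ)..π, cos θ ^ (2*p) * sin θ ^ m := by
  have hd : ∀ θ : ℝ, HasDerivAt (fun θ => cos θ ^ (2*p+1) * sin θ ^ (m+1))
      (-((2*p+1 : ℕ) : ℝ) * (cos θ ^ (2*p) * sin θ ^ (m+2))
        + ((m+1 : ℕ) : ℝ) * (cos θ ^ (2*(p+1)) * sin θ ^ m)) θ := by
    intro θ
    have h1 := ((Real.hasDerivAt_cos θ).fun_pow (2*p+1)).fun_mul ((Real.hasDerivAt_sin θ).fun_pow (m+1))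
    refine h1.congr_deriv ?_
    push_cast
    ring
  have hc : ∀ (j k : ℕ), IntervalIntegrable (fun θ : ℝ => cos θ ^ j * sin θ ^ k)
      MeasureTheory.volume 0 π := fun j k =>
    (Continuous.mul (Real.continuous_cos.pow j) (Real.continuous_sin.pow k)).intervalIntegrable _ _
  have hint := intervalIntegral.integral_eq_sub_of_hasDerivAt
      (f := fun θ => cos θ ^ (2*p+1) * sin θ ^ (m+1))
      (fun θ _ => hd θ) (((hc _ _).const_mul _).add ((hc _ _).const_mul _))
  rw [intervalIntegral.integral_add (((hc _ _).const_mul _)) ((hc _ _).const_mul _),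
    intervalIntegral.integral_const_mul, intervalIntegral.integral_const_mul] at hint
  simp only [Real.sin_pi, Real.sin_zero, Real.cos_pi, Real.cos_zero,
    zero_pow (Nat.succ_ne_zero m), mul_zero, sub_zero, one_pow] at hint
  have hsub : ∫ θ in (0:ℝ)..π, cos θ ^ (2*p) * sin θ ^ (m+2)
      = (∫ θ in (0:ℝ)..π, cos θ ^ (2*p) * sin θ ^ m)
        - ∫ θ in (0:ℝ)..π, cos θ ^ (2*(p+1)) * sin θ ^ m := by
    rw [← intervalIntegral.integral_sub (hc _ _) (hc _ _)]
    apply intervalIntegral.integral_congr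
    intro θ _
    have h2 : sin θ ^ 2 = 1 - cos θ ^ 2 := Real.sin_sq θ
    calc cos θ ^ (2*p) * sin θ ^ (m+2) = cos θ ^ (2*p) * sin θ ^ m * sin θ ^ 2 := by ring
    _ = _ := by rw [h2]; ring
  rw [hsub] at hint
  push_cast at hint ⊢
  linarith

lemma refl_sum (F : ℕ → ℕ → ℝ) (K : ℕ) :
    ∑ p ∈ Finset.range (K+1), F p (K-p) = ∑ p ∈ Finset.range (K+1), F (K-p) p := by
  have h := Finset.sum_range_reflect (fun p => F (K-p) p) (K+1)
  rw [← h]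
  apply Finset.sum_congr rfl
  intro j hj
  rw [Finset.mem_range] at hj
  have h1 : K + 1 - 1 - j = K - j := by omega
  have h2 : K - (K - j) = j := by omega
  rw [h1, h2]

lemma finid (n : ℕ) (hn : 2 ≤ n) (a c : ℕ → ℝ)
    (key : ∀ p, a p = ((2*p+n : ℕ):ℝ) * c p)
    (hc : ∀ p : ℕ, 2*((p:ℝ)+1) * a (p+1) = c p) (k : ℕ) :
    (if k = 0 then 0 else ∑ p ∈ Finset.range k, c p * c (k-1-p))
      + (n:ℝ) * ∑ p ∈ Finset.range (k+1), c p * a (k-p)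
      - ∑ p ∈ Finset.range (k+1), a p * a (k-p)
      = ∑ p ∈ Finset.range (k + 1),
        2 * ((p : ℝ) - ((k - p : ℕ) : ℝ)) ^ 2 /
          (((2 * p + n : ℕ) : ℝ) * ((2 * (k - p) + n : ℕ) : ℝ)) * a p * a (k - p) := by
  have hden : ∀ j : ℕ, ((2*j+n : ℕ):ℝ) ≠ 0 := fun j => Nat.cast_ne_zero.mpr (by omega)
  rcases k with _ | K
  · simp only [if_pos rfl, if_true, zero_add, Nat.zero_sub, Finset.range_one, Finset.sum_singleton,
      Nat.sub_zero]
    rw [key 0]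
    field_simp [hden 0]
    ring
  · rw [if_neg (Nat.succ_ne_zero K)]
    have hN : True := trivial
    -- abbreviations
    set Srhs := ∑ p ∈ Finset.range ((K+1) + 1),
        2 * ((p : ℝ) - (((K+1) - p : ℕ) : ℝ)) ^ 2 /
          (((2 * p + n : ℕ) : ℝ) * ((2 * ((K+1) - p) + n : ℕ) : ℝ)) * a p * a ((K+1) - p) with hSrhs
    set S2 := ∑ p ∈ Finset.range ((K+1)+1), c p * a ((K+1)-p) with hS2
    set S3 := ∑ p ∈ Finset.range ((K+1)+1), a p * a ((K+1)-p) with hS3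
    have e1 : Srhs + S3 - (n:ℝ) * S2
        = ∑ p ∈ Finset.range ((K+1)+1),
            (2*(p:ℝ)^2 + 2*(((K+1)-p : ℕ):ℝ)^2 + 2*(p:ℝ)*(n:ℝ)) * (c p * c ((K+1)-p)) := by
      rw [hSrhs, hS3, hS2, Finset.mul_sum, ← Finset.sum_add_distrib, ← Finset.sum_sub_distrib]
      apply Finset.sum_congr rfl
      intro p _
      rw [key p, key ((K+1)-p)]
      have d1 := hden p
      have d2 := hden ((K+1)-p)
      field_simp
      push_cast
      ring
    have hz : ∑ p ∈ Finset.range ((K+1)+1),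
        ((p:ℝ)*(n:ℝ) - (((K+1)-p : ℕ):ℝ)*(n:ℝ)) * (c p * c ((K+1)-p)) = 0 := by
      have h := refl_sum (fun x y => ((x:ℝ)*(n:ℝ) - ((y:ℕ):ℝ)*(n:ℝ)) * (c x * c y)) (K+1)
      have h2 : ∑ p ∈ Finset.range ((K+1)+1),
          ((((K+1)-p : ℕ):ℝ)*(n:ℝ) - ((p:ℕ):ℝ)*(n:ℝ)) * (c ((K+1)-p) * c p)
          = - ∑ p ∈ Finset.range ((K+1)+1),
            ((p:ℝ)*(n:ℝ) - (((K+1)-p : ℕ):ℝ)*(n:ℝ)) * (c p * c ((K+1)-p)) := by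
        rw [← Finset.sum_neg_distrib]
        apply Finset.sum_congr rfl
        intro p _
        ring
      try simp only at h
      rw [h2] at h
      linarith
    have e2 : ∑ p ∈ Finset.range ((K+1)+1),
            (2*(p:ℝ)^2 + 2*(((K+1)-p : ℕ):ℝ)^2 + 2*(p:ℝ)*(n:ℝ)) * (c p * c ((K+1)-p))
        = 2 * ∑ p ∈ Finset.range ((K+1)+1), (p:ℝ) * a p * c ((K+1)-p) := by
      have eq1 : ∀ p ∈ Finset.range ((K+1)+1),
          (2*(p:ℝ)^2 + 2*(((K+1)-p : ℕ):ℝ)^2 + 2*(p:ℝ)*(n:ℝ)) * (c p * c ((K+1)-p))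
          = (p:ℝ) * a p * c ((K+1)-p) + (((K+1)-p:ℕ):ℝ) * a ((K+1)-p) * c p
            + ((p:ℝ)*(n:ℝ) - (((K+1)-p : ℕ):ℝ)*(n:ℝ)) * (c p * c ((K+1)-p)) := by
        intro p _
        rw [key p, key ((K+1)-p)]
        push_cast
        ring
      rw [Finset.sum_congr rfl eq1, Finset.sum_add_distrib, Finset.sum_add_distrib, hz, add_zero]
      have h := refl_sum (fun x y => ((y:ℕ):ℝ) * a y * c x) (K+1)
      try simp only at h
      rw [h]
      ring
    have e3 : 2 * ∑ p ∈ Finset.range ((K+1)+1), (p:ℝ) * a p * c ((K+1)-p)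
        = ∑ p ∈ Finset.range (K+1), c p * c (K-p) := by
      rw [Finset.mul_sum]
      rw [Finset.sum_range_succ' (fun p => 2 * ((p:ℝ) * a p * c ((K+1)-p))) (K+1)]
      simp only [Nat.cast_zero, zero_mul, mul_zero, add_zero]
      apply Finset.sum_congr rfl
      intro i hi
      have h1 : (K+1) - (i+1) = K - i := by omega
      rw [h1, ← hc i]
      push_cast
      ring
    have e4 : ∑ p ∈ Finset.range (K+1), c p * c ((K+1)-1-p)
        = ∑ p ∈ Finset.range (K+1), c p * c (K-p) :=
      Finset.sum_congr rfl (fun p _ => by rw [show (K+1)-1-p = K-p by omega])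
    rw [e4]
    linarith
lemma arec (n m : ℕ) (hnm : n = m + 2) (a : ℕ → ℝ)
    (ha : ∀ p : ℕ, a p = (1 / (Nat.factorial (2 * p) : ℝ)) *
      ∫ θ in (0:ℝ)..π, (Real.cos θ) ^ (2 * p) * (Real.sin θ) ^ (n - 2)) (p : ℕ) :
    a p = ((2*p+n : ℕ):ℝ) * (((2*p+2 : ℕ):ℝ) * a (p+1)) := by
  have hm : n - 2 = m := by omega
  have h1 := ha p
  have h2 := ha (p+1)
  rw [hm] at h1 h2
  have hrec := intrec m p
  have hfac : (Nat.factorial (2*(p+1)) : ℝ)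
      = ((2*p+2 : ℕ):ℝ) * ((2*p+1 : ℕ):ℝ) * (Nat.factorial (2*p) : ℝ) := by
    have h3 : 2*(p+1) = (2*p+1)+1 := by ring
    rw [h3, Nat.factorial_succ, show 2*p+1 = (2*p)+1 from rfl, Nat.factorial_succ]
    push_cast
    ring
  have hcast : ((2*p+n : ℕ):ℝ) = ((2*p+m+2 : ℕ):ℝ) := by rw [hnm]; push_cast; ring
  have hC : ((2*p+m+2 : ℕ):ℝ) ≠ 0 := Nat.cast_ne_zero.mpr (by omega)
  have hI2 : (∫ θ in (0:ℝ)..π, cos θ ^ (2*(p+1)) * sin θ ^ m)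
      = ((2*p+1 : ℕ):ℝ) * (∫ θ in (0:ℝ)..π, cos θ ^ (2*p) * sin θ ^ m) / ((2*p+m+2 : ℕ):ℝ) := by
    rw [eq_div_iff hC]
    linarith
  rw [h1, h2, hcast, hfac, hI2]
  have f1 : (Nat.factorial (2*p) : ℝ) ≠ 0 := Nat.cast_ne_zero.mpr (Nat.factorial_ne_zero _)
  have f2 : ((2*p+1 : ℕ):ℝ) ≠ 0 := Nat.cast_ne_zero.mpr (by omega)
  have f3 : ((2*p+2 : ℕ):ℝ) ≠ 0 := Nat.cast_ne_zero.mpr (by omega)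
  field_simp

lemma abound (n m : ℕ) (hnm : n = m + 2) (a : ℕ → ℝ)
    (ha : ∀ p : ℕ, a p = (1 / (Nat.factorial (2 * p) : ℝ)) *
      ∫ θ in (0:ℝ)..π, (Real.cos θ) ^ (2 * p) * (Real.sin θ) ^ (n - 2)) (p : ℕ) :
    |a p| ≤ π / (Nat.factorial (2*p) : ℝ) := by
  have hm : n - 2 = m := by omega
  have h1 := ha p
  rw [hm] at h1
  have hb : ‖∫ θ in (0:ℝ)..π, (Real.cos θ) ^ (2*p) * (Real.sin θ) ^ m‖ ≤ 1 * |π - 0| := by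
    apply intervalIntegral.norm_integral_le_of_norm_le_const
    intro x _
    rw [Real.norm_eq_abs, abs_mul, abs_pow, abs_pow]
    have hcos : |Real.cos x| ^ (2*p) ≤ 1 := pow_le_one₀ (abs_nonneg _) (Real.abs_cos_le_one x)
    have hsin : |Real.sin x| ^ m ≤ 1 := pow_le_one₀ (abs_nonneg _) (Real.abs_sin_le_one x)
    calc |Real.cos x| ^ (2*p) * |Real.sin x| ^ m ≤ 1 * 1 :=
        mul_le_mul hcos hsin (by positivity) zero_le_one
      _ = 1 := by norm_num
  rw [Real.norm_eq_abs] at hb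
  have hb' : |∫ θ in (0:ℝ)..π, (Real.cos θ) ^ (2*p) * (Real.sin θ) ^ m| ≤ π := by
    have : |π - 0| = π := by rw [sub_zero, abs_of_nonneg Real.pi_nonneg]
    rw [this] at hb
    linarith
  have hfpos : (0:ℝ) < (Nat.factorial (2*p) : ℝ) := by exact_mod_cast Nat.factorial_pos _
  rw [h1, abs_mul, abs_of_pos (by positivity : (0:ℝ) < 1 / (Nat.factorial (2*p) : ℝ))]
  have h2 := mul_le_mul_of_nonneg_left hb' (le_of_lt (by positivity :
      (0:ℝ) < 1 / (Nat.factorial (2*p) : ℝ)))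
  have h3 : 1 / (Nat.factorial (2*p) : ℝ) * π = π / (Nat.factorial (2*p) : ℝ) := by ring
  linarith

lemma sumfac (x : ℝ) (r : ℕ) :
    Summable (fun p : ℕ => π * |x|^(2*p+r) / (Nat.factorial (2*p+r) : ℝ)) := by
  have h := Real.summable_pow_div_factorial |x|
  have hinj : Function.Injective (fun p : ℕ => 2*p + r) := by
    intro u v huv
    simp only at huv
    omega
  have h2 := (h.mul_left π).comp_injective hinj
  simpa [Function.comp_def, mul_div_assoc] using h2
lemma main_aux (n : ℕ) (hn : 2 ≤ n) (a c : ℕ → ℝ) (κ : ℝ)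
    (key : ∀ p, a p = ((2*p+n : ℕ):ℝ) * c p)
    (hc2 : ∀ p : ℕ, 2*((p:ℝ)+1) * a (p+1) = c p)
    (hA : ∀ p, |a p| ≤ π / ((Nat.factorial (2*p)):ℝ))
    (hC : ∀ p, |c p| ≤ π / ((Nat.factorial (2*p+1)):ℝ)) :
    κ * (∑' p : ℕ, c p * κ^(2*p+1)) ^ 2
      + (n:ℝ) * (∑' p : ℕ, c p * κ^(2*p+1)) * (∑' p : ℕ, a p * κ^(2*p))
      - κ * (∑' p : ℕ, a p * κ^(2*p)) ^ 2
    = ∑' k : ℕ, (∑ p ∈ Finset.range (k + 1),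
        2 * ((p : ℝ) - ((k - p : ℕ) : ℝ)) ^ 2 /
          (((2 * p + n : ℕ) : ℝ) * ((2 * (k - p) + n : ℕ) : ℝ)) * a p * a (k - p))
        * κ ^ (2 * k + 1) := by
  set U : ℕ → ℝ := fun p => a p * κ^(2*p) with hU
  set V : ℕ → ℝ := fun p => c p * κ^(2*p+1) with hV
  -- summability of norms
  have SUn : Summable (fun p => ‖U p‖) := by
    have hs : Summable (fun p : ℕ => π * |κ|^(2*p) / ((Nat.factorial (2*p)):ℝ)) := by
      simpa using sumfac κ 0
    apply Summable.of_nonneg_of_le (fun p => norm_nonneg _) _ hs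
    intro p
    rw [hU]
    rw [norm_mul, norm_pow, Real.norm_eq_abs, Real.norm_eq_abs]
    calc |a p| * |κ|^(2*p) ≤ (π / ((Nat.factorial (2*p)):ℝ)) * |κ|^(2*p) := by
          gcongr; exact hA p
      _ = π * |κ|^(2*p) / ((Nat.factorial (2*p)):ℝ) := by ring
  have SVn : Summable (fun p => ‖V p‖) := by
    have hs : Summable (fun p : ℕ => π * |κ|^(2*p+1) / ((Nat.factorial (2*p+1)):ℝ)) := sumfac κ 1
    apply Summable.of_nonneg_of_le (fun p => norm_nonneg _) _ hs
    intro p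
    rw [hV]
    rw [norm_mul, norm_pow, Real.norm_eq_abs, Real.norm_eq_abs]
    calc |c p| * |κ|^(2*p+1) ≤ (π / ((Nat.factorial (2*p+1)):ℝ)) * |κ|^(2*p+1) := by
          gcongr; exact hC p
      _ = π * |κ|^(2*p+1) / ((Nat.factorial (2*p+1)):ℝ) := by ring
  -- Cauchy products
  have hVV : (∑' p, V p) * (∑' p, V p)
      = ∑' k : ℕ, ∑ j ∈ Finset.range (k+1), V j * V (k-j) :=
    tsum_mul_tsum_eq_tsum_sum_range_of_summable_norm SVn SVn
  have hVU : (∑' p, V p) * (∑' p, U p)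
      = ∑' k : ℕ, ∑ j ∈ Finset.range (k+1), V j * U (k-j) :=
    tsum_mul_tsum_eq_tsum_sum_range_of_summable_norm SVn SUn
  have hUU : (∑' p, U p) * (∑' p, U p)
      = ∑' k : ℕ, ∑ j ∈ Finset.range (k+1), U j * U (k-j) :=
    tsum_mul_tsum_eq_tsum_sum_range_of_summable_norm SUn SUn
  have SP1 : Summable (fun k : ℕ => ∑ j ∈ Finset.range (k+1), V j * V (k-j)) :=
    (summable_norm_sum_mul_range_of_summable_norm SVn SVn).of_norm
  have SP2 : Summable (fun k : ℕ => ∑ j ∈ Finset.range (k+1), V j * U (k-j)) :=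
    (summable_norm_sum_mul_range_of_summable_norm SVn SUn).of_norm
  have SP3 : Summable (fun k : ℕ => ∑ j ∈ Finset.range (k+1), U j * U (k-j)) :=
    (summable_norm_sum_mul_range_of_summable_norm SUn SUn).of_norm
  -- coefficient forms
  have g1 : ∀ k : ℕ, ∑ j ∈ Finset.range (k+1), V j * V (k-j)
      = (∑ j ∈ Finset.range (k+1), c j * c (k-j)) * κ^(2*k+2) := by
    intro k
    rw [Finset.sum_mul]
    apply Finset.sum_congr rfl
    intro j hj
    rw [Finset.mem_range] at hj
    rw [hV]
    simp only
    rw [show 2*k+2 = (2*j+1) + (2*(k-j)+1) by omega, pow_add]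
    ring
  have g2 : ∀ k : ℕ, ∑ j ∈ Finset.range (k+1), V j * U (k-j)
      = (∑ j ∈ Finset.range (k+1), c j * a (k-j)) * κ^(2*k+1) := by
    intro k
    rw [Finset.sum_mul]
    apply Finset.sum_congr rfl
    intro j hj
    rw [Finset.mem_range] at hj
    rw [hV, hU]
    simp only
    rw [show 2*k+1 = (2*j+1) + 2*(k-j) by omega, pow_add]
    ring
  have g3 : ∀ k : ℕ, ∑ j ∈ Finset.range (k+1), U j * U (k-j)
      = (∑ j ∈ Finset.range (k+1), a j * a (k-j)) * κ^(2*k) := by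
    intro k
    rw [Finset.sum_mul]
    apply Finset.sum_congr rfl
    intro j hj
    rw [Finset.mem_range] at hj
    rw [hU]
    simp only
    rw [show 2*k = 2*j + 2*(k-j) by omega, pow_add]
    ring
  -- W: shifted first coefficient
  set W : ℕ → ℝ := fun k => if k = 0 then 0
    else ∑ p ∈ Finset.range k, c p * c (k-1-p) with hW
  have hWsucc : ∀ k : ℕ, W (k+1) = ∑ p ∈ Finset.range (k+1), c p * c (k-p) := by
    intro k
    rw [hW]
    simp only [Nat.succ_ne_zero, if_false, Nat.add_sub_cancel]
  have hWs : Summable (fun k => W k * κ^(2*k+1)) := by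
    rw [← summable_nat_add_iff 1]
    apply Summable.congr (SP1.mul_left κ)
    intro k
    rw [g1 k, hWsucc k]
    ring
  have hS2s : Summable (fun k : ℕ => (n:ℝ) *
      ((∑ j ∈ Finset.range (k+1), c j * a (k-j)) * κ^(2*k+1))) := by
    apply Summable.congr (SP2.mul_left (n:ℝ))
    intro k
    rw [g2 k]
  have hS3s : Summable (fun k : ℕ =>
      (∑ j ∈ Finset.range (k+1), a j * a (k-j)) * κ^(2*k+1)) := by
    apply Summable.congr (SP3.mul_left κ)
    intro k
    rw [g3 k]
    ring
  -- rewrite the three products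
  have E1 : κ * (∑' p, V p) ^ 2 = ∑' k, W k * κ^(2*k+1) := by
    have h0 : W 0 * κ^(2*0+1) = 0 := by rw [hW]; simp
    rw [sq, hVV, ← tsum_mul_left, hWs.tsum_eq_zero_add, h0, zero_add]
    apply tsum_congr
    intro k
    rw [g1 k, hWsucc k]
    ring
  have E2 : (n:ℝ) * (∑' p, V p) * (∑' p, U p)
      = ∑' k, (n:ℝ) * ((∑ j ∈ Finset.range (k+1), c j * a (k-j)) * κ^(2*k+1)) := by
    rw [mul_assoc, hVU, ← tsum_mul_left]
    apply tsum_congr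
    intro k
    rw [g2 k]
  have E3 : κ * (∑' p, U p) ^ 2
      = ∑' k, (∑ j ∈ Finset.range (k+1), a j * a (k-j)) * κ^(2*k+1) := by
    rw [sq, hUU, ← tsum_mul_left]
    apply tsum_congr
    intro k
    rw [g3 k]
    ring
  rw [E1, E2, E3, ← hWs.tsum_add hS2s, ← (hWs.add hS2s).tsum_sub hS3s]
  apply tsum_congr
  intro k
  have hf := finid n hn a c key hc2 k
  rw [hW]
  simp only
  linear_combination κ^(2*k+1) * hf

/-- For `n ≥ 2`, with `a_p = (1/(2p)!) ∫_0^π cos^{2p}θ sin^{n-2}θ dθ`, the power series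
identity
`κ [cosθ]_κ² + n [cosθ]_κ [1]_κ − κ [1]_κ²
  = Σ_{k≥0} ( Σ_{p+q=k} 2(p−q)²/((2p+n)(2q+n)) a_p a_q ) κ^{2k+1}`
holds, where `[1]_κ = Σ_p a_p κ^{2p}` and `[cosθ]_κ = Σ_p (2p+2) a_{p+1} κ^{2p+1}`. -/
theorem stmt2 (n : ℕ) (hn : 2 ≤ n) (a : ℕ → ℝ)
    (ha : ∀ p : ℕ, a p = (1 / (Nat.factorial (2 * p) : ℝ)) *
      ∫ θ in (0:ℝ)..π, (Real.cos θ) ^ (2 * p) * (Real.sin θ) ^ (n - 2))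
    (κ : ℝ) (One Cos : ℝ)
    (hOne : One = ∑' p : ℕ, a p * κ ^ (2 * p))
    (hCos : Cos = ∑' p : ℕ, ((2 * p + 2 : ℕ) : ℝ) * a (p + 1) * κ ^ (2 * p + 1)) :
    κ * Cos ^ 2 + (n : ℝ) * Cos * One - κ * One ^ 2 =
      ∑' k : ℕ, (∑ p ∈ Finset.range (k + 1),
        2 * ((p : ℝ) - ((k - p : ℕ) : ℝ)) ^ 2 /
          (((2 * p + n : ℕ) : ℝ) * ((2 * (k - p) + n : ℕ) : ℝ)) * a p * a (k - p))
        * κ ^ (2 * k + 1) := by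
  obtain ⟨m, hnm⟩ : ∃ m, n = m + 2 := ⟨n - 2, by omega⟩
  have key := arec n m hnm a ha
  have hA := abound n m hnm a ha
  have hc2 : ∀ p : ℕ, 2*((p:ℝ)+1) * a (p+1) = ((2*p+2 : ℕ):ℝ) * a (p+1) := by
    intro p; push_cast; ring
  have hC : ∀ p : ℕ, |((2*p+2 : ℕ):ℝ) * a (p+1)| ≤ π / ((Nat.factorial (2*p+1)):ℝ) := by
    intro p
    have hfact : ((Nat.factorial (2*(p+1))) : ℝ)
        = ((2*p+2 : ℕ):ℝ) * ((Nat.factorial (2*p+1)) : ℝ) := by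
      rw [show 2*(p+1) = (2*p+1)+1 by ring, Nat.factorial_succ]
      push_cast
      ring
    have f2 : ((2*p+2 : ℕ):ℝ) ≠ 0 := Nat.cast_ne_zero.mpr (by omega)
    have f1 : ((Nat.factorial (2*p+1)) : ℝ) ≠ 0 := Nat.cast_ne_zero.mpr (Nat.factorial_ne_zero _)
    calc |((2*p+2 : ℕ):ℝ) * a (p+1)| = ((2*p+2 : ℕ):ℝ) * |a (p+1)| := by
          rw [abs_mul, abs_of_nonneg (by positivity)]
      _ ≤ ((2*p+2 : ℕ):ℝ) * (π / ((Nat.factorial (2*(p+1))):ℝ)) := by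
          gcongr; exact hA (p+1)
      _ = π / ((Nat.factorial (2*p+1)):ℝ) := by rw [hfact]; field_simp
  rw [hOne, hCos]
  exact main_aux n hn a (fun p => ((2*p+2 : ℕ):ℝ) * a (p+1)) κ key hc2 hA hC
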